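/- arXiv:1708.08096 — 2 statements merged into one kernel-verified Lean document; each statement's English description precedes it below -/
import Mathlib

section
/- For every odd integer k ≥ 1 and every n ≥ k, the sign of the coefficient e_k(n) of x^{n-k} in the Euler polynomial E_n(x) is (-1)^{(k+1)/2}. -/
open Polynomial Finset

/-- Euler polynomials `E n`, defined by the recursion
`E n = X^n - (1/2) * ∑_{k<n} (n choose k) • E k`, equivalent to the
generating function `2 e^{xt}/(e^t + 1) = ∑ E_n(x) t^n/n!`. -/
noncomputable def eulerPoly : ℕ → Polynomial ℚ :=
  WellFounded.fix Nat.lt_wfRel.wf fun n E =>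
    Polynomial.X ^ n - (2⁻¹ : ℚ) • ∑ k : Fin n, ((n.choose k : ℚ)) • E k k.2

lemma eulerPoly_eq (n : ℕ) : eulerPoly n =
    Polynomial.X ^ n - (2⁻¹ : ℚ) • ∑ k ∈ Finset.range n, ((n.choose k : ℚ)) • eulerPoly k := by
  conv_lhs => rw [eulerPoly, WellFounded.fix_eq]
  congr 1
  rw [← Fin.sum_univ_eq_sum_range fun k => ((n.choose k : ℚ)) • eulerPoly k]
  exact congrArg _ (Finset.sum_congr rfl fun k _ => rfl)

/-- constant coefficient of Euler polynomial, `E n (0)`. -/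
noncomputable def ec (n : ℕ) : ℚ := (eulerPoly n).coeff 0

lemma ec_zero : ec 0 = 1 := by
  rw [ec, eulerPoly_eq]; simp

lemma ec_rec (n : ℕ) (hn : 1 ≤ n) :
    ec n = -2⁻¹ * ∑ k ∈ Finset.range n, (n.choose k : ℚ) * ec k := by
  rw [ec, eulerPoly_eq]
  rw [Polynomial.coeff_sub, Polynomial.coeff_smul, Polynomial.coeff_X_pow,
    Polynomial.finset_sum_coeff]
  simp only [Polynomial.coeff_smul, smul_eq_mul]
  rw [if_neg (by omega)]
  simp only [ec]
  ring

lemma coeff_eulerPoly_of_lt (n j : ℕ) (h : n < j) : (eulerPoly n).coeff j = 0 := by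
  induction n using Nat.strong_induction_on with
  | _ n ih =>
    rw [eulerPoly_eq]
    rw [Polynomial.coeff_sub, Polynomial.coeff_smul, Polynomial.coeff_X_pow,
      Polynomial.finset_sum_coeff]
    rw [if_neg (by omega)]
    rw [Finset.sum_eq_zero fun k hk => by
      rw [Polynomial.coeff_smul, ih k (Finset.mem_range.mp hk) (by
        have := Finset.mem_range.mp hk; omega), smul_zero]]
    simp

lemma coeff_eulerPoly (n : ℕ) : ∀ j ≤ n, (eulerPoly n).coeff j = (n.choose j : ℚ) * ec (n - j) := by
  induction n using Nat.strong_induction_on with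
  | _ n ih =>
    intro j hj
    rw [eulerPoly_eq, Polynomial.coeff_sub, Polynomial.coeff_smul, Polynomial.coeff_X_pow,
      Polynomial.finset_sum_coeff]
    simp only [Polynomial.coeff_smul, smul_eq_mul]
    rcases eq_or_lt_of_le hj with rfl | hjn
    · rw [if_pos rfl]
      rw [Finset.sum_eq_zero fun k hk => by
        rw [coeff_eulerPoly_of_lt k j (Finset.mem_range.mp hk), mul_zero]]
      simp [ec_zero]
    · -- j < n
      rw [if_neg (by omega)]
      have hsplit : ∑ k ∈ Finset.range n, (n.choose k : ℚ) * (eulerPoly k).coeff j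
          = ∑ i ∈ Finset.range (n - j), (n.choose (j + i) : ℚ) * (eulerPoly (j + i)).coeff j := by
        rw [Finset.range_eq_Ico, ← Finset.sum_Ico_consecutive _ (Nat.zero_le j) (le_of_lt hjn)]
        have h1 : ∑ k ∈ Finset.Ico 0 j, (n.choose k : ℚ) * (eulerPoly k).coeff j = 0 :=
          Finset.sum_eq_zero fun k hk => by
            rw [coeff_eulerPoly_of_lt k j (by simpa using (Finset.mem_Ico.mp hk).2), mul_zero]
        rw [h1, zero_add, Finset.sum_Ico_eq_sum_range]
      rw [hsplit]
      have hterm : ∀ i ∈ Finset.range (n - j), (n.choose (j + i) : ℚ) * (eulerPoly (j + i)).coeff j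
          = (n.choose j : ℚ) * (((n - j).choose i : ℚ) * ec i) := by
        intro i hi
        have hi' : i < n - j := Finset.mem_range.mp hi
        have h1 : j + i < n := by omega
        rw [ih (j + i) h1 j (Nat.le_add_right _ _)]
        have : (n.choose (j + i)) * ((j + i).choose j) = n.choose j * ((n - j).choose i) := by
          have := Nat.choose_mul (n := n) (Nat.le_add_right j i)
          simpa using this
        push_cast [Nat.add_sub_cancel_left] at *
        rw [← mul_assoc, ← Nat.cast_mul, this]
        push_cast
        ring
      rw [Finset.sum_congr rfl hterm, ← Finset.mul_sum]
      rw [ec_rec (n - j) (by omega)]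
      ring

open Nat

lemma ec_one : ec 1 = -2⁻¹ := by
  rw [ec_rec 1 le_rfl]; simp [ec_zero]

lemma hlin (n : ℕ) (hn : 1 ≤ n) :
    ∑ k ∈ Finset.range (n + 1), (n.choose k : ℚ) * ec k = -ec n := by
  rw [Finset.sum_range_succ]
  have := ec_rec n hn
  simp only [Nat.choose_self, Nat.cast_one, one_mul]
  linarith

noncomputable def EC : PowerSeries ℚ := PowerSeries.mk fun n => ec n / n !
noncomputable def ED : PowerSeries ℚ := PowerSeries.mk fun n => ec (n + 1) / n !

lemma fact_helper {n k : ℕ} (h : k ≤ n) (x y : ℚ) :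
    x / k ! * (y / (n - k)!) = (n.choose k : ℚ) * x * y / n ! := by
  rw [Nat.cast_choose ℚ h]
  have h1 : (k ! : ℚ) ≠ 0 := Nat.cast_ne_zero.mpr (Nat.factorial_ne_zero k)
  have h2 : ((n - k)! : ℚ) ≠ 0 := Nat.cast_ne_zero.mpr (Nat.factorial_ne_zero _)
  have h3 : (n ! : ℚ) ≠ 0 := Nat.cast_ne_zero.mpr (Nat.factorial_ne_zero n)
  field_simp

lemma coeff_mul_exp (f : ℕ → ℚ) (n : ℕ) :
    PowerSeries.coeff n (PowerSeries.mk (fun m => f m / m !) * PowerSeries.exp ℚ)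
      = (∑ k ∈ Finset.range (n + 1), (n.choose k : ℚ) * f k) / n ! := by
  rw [PowerSeries.coeff_mul, Finset.Nat.sum_antidiagonal_eq_sum_range_succ_mk, Finset.sum_div]
  refine Finset.sum_congr rfl fun k hk => ?_
  have hkn : k ≤ n := by have := Finset.mem_range.mp hk; omega
  rw [PowerSeries.coeff_mk, PowerSeries.coeff_exp]
  simp only [map_div₀, map_one]
  rw [show ((algebraMap ℚ ℚ) ↑(n - k)! : ℚ) = ((n-k)! : ℚ) from rfl]
  rw [fact_helper hkn, mul_one]

lemma pascal_sum (f : ℕ → ℚ) (n : ℕ) :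
    ∑ k ∈ Finset.range (n + 2), ((n + 1).choose k : ℚ) * f k
      = ∑ k ∈ Finset.range (n + 1), (n.choose k : ℚ) * f (k + 1)
        + ∑ k ∈ Finset.range (n + 1), (n.choose k : ℚ) * f k := by
  rw [Finset.sum_range_succ' _ (n + 1), Finset.sum_range_succ' (fun k => (n.choose k : ℚ) * f k) n]
  have h1 : ∀ k, (((n+1).choose (k+1) : ℚ)) * f (k+1)
      = (n.choose k : ℚ) * f (k+1) + (n.choose (k+1) : ℚ) * f (k+1) := by
    intro k
    rw [Nat.choose_succ_succ]
    push_cast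
    ring
  rw [Finset.sum_congr rfl fun k _ => h1 k, Finset.sum_add_distrib]
  have h2 : ∑ k ∈ Finset.range (n + 1), (n.choose (k+1) : ℚ) * f (k+1)
      = ∑ k ∈ Finset.range n, (n.choose (k+1) : ℚ) * f (k+1) := by
    rw [Finset.sum_range_succ, Nat.choose_succ_self]
    simp
  rw [h2]
  simp [Nat.choose_zero_right]
  ring


lemma coeff_two (n : ℕ) : PowerSeries.coeff n (2 : PowerSeries ℚ) = if n = 0 then 2 else 0 := by
  rw [← map_ofNat (PowerSeries.C (R := ℚ)) 2, PowerSeries.coeff_C]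

lemma coeff_EC (n : ℕ) : PowerSeries.coeff n EC = ec n / n ! := by
  rw [EC, PowerSeries.coeff_mk]

lemma coeff_ED (n : ℕ) : PowerSeries.coeff n ED = ec (n + 1) / n ! := by
  rw [ED, PowerSeries.coeff_mk]

lemma hCE : EC * PowerSeries.exp ℚ = 2 - EC := by
  ext n
  rw [EC, coeff_mul_exp, map_sub, ← EC, coeff_EC, coeff_two]
  rcases Nat.eq_zero_or_pos n with rfl | hn
  · simp [ec_zero]
    norm_num
  · rw [hlin n hn, if_neg (by omega)]
    ring

lemma key (n : ℕ) (hn : 1 ≤ n) :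
    ∑ k ∈ Finset.range (n + 1), (n.choose k : ℚ) * ec (k + 1) + ec (n + 1) = ec n := by
  obtain ⟨m, rfl⟩ : ∃ m, n = m + 1 := ⟨n - 1, by omega⟩
  have hp := pascal_sum ec (m + 1)
  have h1 := hlin (m + 2) (by omega)
  have h2 := hlin (m + 1) (by omega)
  ring_nf at hp h1 h2 ⊢
  linarith

lemma hDE : ED * (PowerSeries.exp ℚ + 1) = EC - 2 := by
  ext n
  rw [mul_add, mul_one, map_add, ED, coeff_mul_exp, ← ED, coeff_ED, map_sub, coeff_EC, coeff_two]
  rcases Nat.eq_zero_or_pos n with rfl | hn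
  · simp [ec_zero, ec_one]
    norm_num
  · rw [if_neg (by omega)]
    have hk := key n hn
    have hfac : (n ! : ℚ) ≠ 0 := Nat.cast_ne_zero.mpr (Nat.factorial_ne_zero _)
    field_simp
    linarith

lemma hmain : (2 : PowerSeries ℚ) * ED = EC * EC - 2 * EC := by
  have hA : EC * (PowerSeries.exp ℚ + 1) = 2 := by
    rw [mul_add, hCE, mul_one]; ring
  calc (2 : PowerSeries ℚ) * ED = EC * (PowerSeries.exp ℚ + 1) * ED := by rw [hA]
    _ = EC * (ED * (PowerSeries.exp ℚ + 1)) := by ring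
    _ = EC * (EC - 2) := by rw [hDE]
    _ = EC * EC - 2 * EC := by ring

lemma quad (n : ℕ) : 2 * ec (n + 1)
    = (∑ k ∈ Finset.range (n + 1), (n.choose k : ℚ) * ec k * ec (n - k)) - 2 * ec n := by
  have h := congrArg (PowerSeries.coeff n) hmain
  rw [map_sub] at h
  rw [show (2 : PowerSeries ℚ) = (PowerSeries.C (R := ℚ)) 2 from (map_ofNat (PowerSeries.C (R := ℚ)) 2).symm] at h
  rw [PowerSeries.coeff_C_mul, PowerSeries.coeff_C_mul, coeff_ED, coeff_EC] at h
  have h2 : PowerSeries.coeff n (EC * EC)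
      = (∑ k ∈ Finset.range (n + 1), (n.choose k : ℚ) * ec k * ec (n - k)) / n ! := by
    rw [PowerSeries.coeff_mul, Finset.Nat.sum_antidiagonal_eq_sum_range_succ_mk, Finset.sum_div]
    refine Finset.sum_congr rfl fun k hk => ?_
    have hkn : k ≤ n := by have := Finset.mem_range.mp hk; omega
    rw [coeff_EC, coeff_EC, fact_helper hkn]
  rw [h2] at h
  have hfac : (n ! : ℚ) ≠ 0 := Nat.cast_ne_zero.mpr (Nat.factorial_ne_zero _)
  field_simp at h
  linarith

lemma ec_even : ∀ j, Even j → j ≠ 0 → ec j = 0 := by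
  intro j
  induction j using Nat.strong_induction_on with
  | _ j ih =>
    intro hev hj0
    obtain ⟨n, rfl⟩ : ∃ n, j = n + 1 := ⟨j - 1, by omega⟩
    have hodd : Odd n := by
      rw [Nat.odd_iff]
      have := Nat.even_iff.mp hev
      omega
    have hn1 : 1 ≤ n := by
      rcases hodd with ⟨t, ht⟩
      omega
    have hq := quad n
    have hsum : ∑ k ∈ Finset.range (n + 1), (n.choose k : ℚ) * ec k * ec (n - k)
        = 2 * ec n := by
      have hterm : ∀ k ∈ Finset.range (n + 1), (n.choose k : ℚ) * ec k * ec (n - k)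
          = (if k = 0 then ec n else 0) + (if k = n then ec n else 0) := by
        intro k hk
        have hkn : k ≤ n := by have := Finset.mem_range.mp hk; omega
        by_cases hk0 : k = 0
        · subst hk0
          rw [if_pos rfl, if_neg (by omega)]
          simp [ec_zero]
        · by_cases hkn' : k = n
          · subst hkn'
            rw [if_neg hk0, if_pos rfl]
            simp [ec_zero]
          · rw [if_neg hk0, if_neg hkn']
            rcases Nat.even_or_odd k with he | ho
            · rw [ih k (by omega) he hk0]; ring
            · have hnk : Even (n - k) := Nat.Odd.sub_odd hodd ho
              have : ec (n - k) = 0 := ih (n - k) (by omega) hnk (by omega)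
              rw [this]; ring
      rw [Finset.sum_congr rfl hterm, Finset.sum_add_distrib,
        Finset.sum_ite_eq' (Finset.range (n + 1)) 0 (fun _ => ec n),
        Finset.sum_ite_eq' (Finset.range (n + 1)) n (fun _ => ec n)]
      rw [if_pos (Finset.mem_range.mpr (by omega)), if_pos (Finset.mem_range.mpr (by omega))]
      ring
    rw [hsum] at hq
    linarith

lemma ec_sign : ∀ j, Odd j → 0 < (-1 : ℚ) ^ ((j + 1) / 2) * ec j := by
  intro j
  induction j using Nat.strong_induction_on with
  | _ j ih =>
    intro hodd
    rcases eq_or_ne j 1 with rfl | hj1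
    · rw [ec_one]; norm_num
    · obtain ⟨n, rfl⟩ : ∃ n, j = n + 1 := ⟨j - 1, by rcases hodd with ⟨t, ht⟩; omega⟩
      have hne : Even n := by
        rw [Nat.even_iff]
        have := Nat.odd_iff.mp hodd
        omega
      have hn2 : 2 ≤ n := by
        rcases hne with ⟨t, ht⟩
        omega
      have hq := quad n
      rw [ec_even n hne (by omega)] at hq
      -- hq : 2 * ec (n+1) = Σ - 2*0
      have hterm : ∀ k ∈ Finset.range (n + 1),
          0 ≤ (-1 : ℚ) ^ ((n + 2) / 2) * ((n.choose k : ℚ) * ec k * ec (n - k)) := by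
        intro k hk
        have hkn : k ≤ n := by have := Finset.mem_range.mp hk; omega
        rcases Nat.even_or_odd k with he | ho
        · rcases eq_or_ne k 0 with rfl | hk0
          · rw [Nat.sub_zero, ec_even n hne (by omega)]
            ring_nf; exact le_refl 0
          · rw [ec_even k he hk0]
            ring_nf; exact le_refl 0
        · have hnk : Odd (n - k) := Nat.Even.sub_odd hkn hne ho
          have hkne : k ≠ n := by
            intro h; subst h; exact (Nat.not_even_iff_odd.mpr ho) hne
          have hexp : (n + 2) / 2 = (k + 1) / 2 + (n - k + 1) / 2 := by
            have h1 := Nat.odd_iff.mp ho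
            have h2 := Nat.even_iff.mp hne
            omega
          have i1 := ih k (by omega) ho
          have i2 := ih (n - k) (by omega) hnk
          have : (-1 : ℚ) ^ ((n + 2) / 2) * ((n.choose k : ℚ) * ec k * ec (n - k))
              = (n.choose k : ℚ) * (((-1 : ℚ) ^ ((k + 1) / 2) * ec k)
                * ((-1 : ℚ) ^ ((n - k + 1) / 2) * ec (n - k))) := by
            rw [hexp, pow_add]; ring
          rw [this]
          positivity
      have hone : 0 < (-1 : ℚ) ^ ((n + 2) / 2) * ((n.choose 1 : ℚ) * ec 1 * ec (n - 1)) := by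
        have ho : Odd 1 := ⟨0, rfl⟩
        have hnk : Odd (n - 1) := Nat.Even.sub_odd (by omega) hne ho
        have hexp : (n + 2) / 2 = (1 + 1) / 2 + (n - 1 + 1) / 2 := by
          have h2 := Nat.even_iff.mp hne
          omega
        have i1 := ih 1 (by omega) ho
        have i2 := ih (n - 1) (by omega) hnk
        have : (-1 : ℚ) ^ ((n + 2) / 2) * ((n.choose 1 : ℚ) * ec 1 * ec (n - 1))
            = (n.choose 1 : ℚ) * (((-1 : ℚ) ^ ((1 + 1) / 2) * ec 1)
              * ((-1 : ℚ) ^ ((n - 1 + 1) / 2) * ec (n - 1))) := by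
          rw [hexp, pow_add]; ring
        rw [this, Nat.choose_one_right]
        have : (0 : ℚ) < n := by exact_mod_cast (by omega : 0 < n)
        positivity
      have hpos : 0 < ∑ k ∈ Finset.range (n + 1),
          (-1 : ℚ) ^ ((n + 2) / 2) * ((n.choose k : ℚ) * ec k * ec (n - k)) :=
        Finset.sum_pos' hterm ⟨1, Finset.mem_range.mpr (by omega), hone⟩
      rw [← Finset.mul_sum] at hpos
      have heq : (n + 1 + 1) / 2 = (n + 2) / 2 := by omega
      rw [heq]
      have hS : ∑ k ∈ Finset.range (n + 1), (n.choose k : ℚ) * ec k * ec (n - k)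
          = 2 * ec (n + 1) := by linarith
      rw [hS] at hpos
      nlinarith [hpos]

theorem stmt_9 (k : ℕ) (hk : Odd k) (hk1 : 1 ≤ k) (n : ℕ) (hkn : k ≤ n) :
    0 < (-1 : ℚ) ^ ((k + 1) / 2) * (eulerPoly n).coeff (n - k) := by
  rw [coeff_eulerPoly n (n - k) (by omega), Nat.sub_sub_self hkn]
  have hc : 0 < (n.choose (n - k) : ℚ) := by
    exact_mod_cast Nat.choose_pos (Nat.sub_le n k)
  have hs := ec_sign k hk
  calc (0 : ℚ) < (n.choose (n - k) : ℚ) * ((-1 : ℚ) ^ ((k + 1) / 2) * ec k) :=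
        mul_pos hc hs
    _ = (-1 : ℚ) ^ ((k + 1) / 2) * ((n.choose (n - k) : ℚ) * ec k) := by ring
end

section
/- For every n ≥ 1 of the form n = 2^m - 1, the denominator of E_n(x) - E_n(1) equals 2^{m-1}. -/
open Polynomial Finset

theorem eulerPoly_def (n : ℕ) :
    eulerPoly n = Polynomial.X ^ n
      - (2⁻¹ : ℚ) • ∑ k ∈ range n, ((n.choose k : ℚ)) • eulerPoly k := by
  conv_lhs => rw [eulerPoly, WellFounded.fix_eq]
  rw [← Fin.sum_univ_eq_sum_range (fun k => ((n.choose k : ℚ)) • eulerPoly k) n]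
  rfl

noncomputable def ee (n : ℕ) : ℚ := (eulerPoly n).eval 0

theorem ee_zero : ee 0 = 1 := by
  simp [ee, eulerPoly_def 0]

theorem ee_rec (n : ℕ) :
    ee n = (if n = 0 then 1 else 0) - 2⁻¹ * ∑ k ∈ range n, (n.choose k : ℚ) * ee k := by
  unfold ee
  rw [eulerPoly_def n]
  simp [eval_finset_sum, zero_pow_eq, smul_eq_mul, Finset.mul_sum]

theorem sum_choose_ee (s : ℕ) :
    ∑ k ∈ range s, (s.choose k : ℚ) * ee k = (if s = 0 then 2 else 0) - 2 * ee s := by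
  have h := ee_rec s
  have : 2⁻¹ * ∑ k ∈ range s, (s.choose k : ℚ) * ee k = (if s = 0 then 1 else 0) - ee s := by
    rw [h]; ring
  calc ∑ k ∈ range s, (s.choose k : ℚ) * ee k
      = 2 * (2⁻¹ * ∑ k ∈ range s, (s.choose k : ℚ) * ee k) := by ring
    _ = (if s = 0 then 2 else 0) - 2 * ee s := by rw [this]; split <;> ring

theorem trinom {n i t : ℕ} (h : i + t ≤ n) :
    n.choose (i + t) * (i + t).choose i = n.choose i * (n - i).choose t := by
  have hi : i ≤ n := le_trans (Nat.le_add_right i t) h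
  have ht : t ≤ n - i := Nat.le_sub_of_add_le (by omega)
  have key : n.choose (i + t) * (i + t).choose i * (Nat.factorial i * Nat.factorial t * Nat.factorial (n - i - t))
      = n.choose i * (n - i).choose t * (Nat.factorial i * Nat.factorial t * Nat.factorial (n - i - t)) := by
    have e1 : (i + t).choose i * Nat.factorial i * Nat.factorial t = Nat.factorial (i + t) := by
      have := Nat.choose_mul_factorial_mul_factorial (Nat.le_add_right i t)
      simpa [Nat.add_sub_cancel_left] using this
    have e2 : n.choose (i + t) * Nat.factorial (i + t) * Nat.factorial (n - (i + t)) = Nat.factorial n :=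
      Nat.choose_mul_factorial_mul_factorial h
    have e3 : (n - i).choose t * Nat.factorial t * Nat.factorial (n - i - t) = Nat.factorial (n - i) :=
      Nat.choose_mul_factorial_mul_factorial ht
    have e4 : n.choose i * Nat.factorial i * Nat.factorial (n - i) = Nat.factorial n :=
      Nat.choose_mul_factorial_mul_factorial hi
    have hnit : n - (i + t) = n - i - t := by omega
    calc n.choose (i + t) * (i + t).choose i * (Nat.factorial i * Nat.factorial t * Nat.factorial (n - i - t))
        = n.choose (i + t) * ((i + t).choose i * Nat.factorial i * Nat.factorial t) * Nat.factorial (n - i - t) := by ring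
      _ = n.choose (i + t) * Nat.factorial (i + t) * Nat.factorial (n - (i + t)) := by rw [e1, hnit]
      _ = Nat.factorial n := e2
      _ = n.choose i * Nat.factorial i * Nat.factorial (n - i) := e4.symm
      _ = n.choose i * Nat.factorial i * ((n - i).choose t * Nat.factorial t * Nat.factorial (n - i - t)) := by rw [e3]
      _ = n.choose i * (n - i).choose t * (Nat.factorial i * Nat.factorial t * Nat.factorial (n - i - t)) := by ring
  exact Nat.eq_of_mul_eq_mul_right (by positivity) key

theorem coeff_euler (n : ℕ) : ∀ i : ℕ,
    (eulerPoly n).coeff i = (n.choose i : ℚ) * ee (n - i) := by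
  induction n using Nat.strong_induction_on with
  | _ n IH =>
    intro i
    rw [eulerPoly_def n]
    rw [coeff_sub, coeff_smul, coeff_X_pow, Polynomial.finset_sum_coeff]
    have hc : ∀ k ∈ range n, ((n.choose k : ℚ) • eulerPoly k).coeff i
        = (n.choose k : ℚ) * ((k.choose i : ℚ) * ee (k - i)) := by
      intro k hk
      rw [coeff_smul, IH k (mem_range.mp hk)]
      simp [smul_eq_mul]
    rw [Finset.sum_congr rfl hc]
    by_cases hin : n ≤ i
    · -- all choose k i = 0 since k < n ≤ i, unless i = n
      have hz : ∀ k ∈ range n, (n.choose k : ℚ) * ((k.choose i : ℚ) * ee (k - i)) = 0 := by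
        intro k hk
        have : k.choose i = 0 := Nat.choose_eq_zero_of_lt (lt_of_lt_of_le (mem_range.mp hk) hin)
        simp [this]
      rw [Finset.sum_eq_zero hz]
      rcases eq_or_lt_of_le hin with h | h
      · simp [← h, ee_zero]
      · simp [Nat.choose_eq_zero_of_lt h, (Nat.ne_of_lt h).symm]
    · push_neg at hin
      have hif : (if i = n then (1:ℚ) else 0) = 0 := by simp [Nat.ne_of_lt hin]
      rw [hif]
      -- split the sum at i
      have hsplit : ∑ k ∈ range n, (n.choose k : ℚ) * ((k.choose i : ℚ) * ee (k - i))
          = ∑ t ∈ range (n - i), (n.choose (i + t) : ℚ) * (((i + t).choose i : ℚ) * ee t) := by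
        rw [← Finset.sum_range_add_sum_Ico _ (le_of_lt hin)]
        have h1 : ∑ k ∈ Finset.range i, (n.choose k : ℚ) * ((k.choose i : ℚ) * ee (k - i)) = 0 := by
          apply Finset.sum_eq_zero
          intro k hk
          have : k.choose i = 0 := Nat.choose_eq_zero_of_lt (mem_range.mp hk)
          simp [this]
        rw [h1, zero_add, Finset.sum_Ico_eq_sum_range]
        apply Finset.sum_congr rfl
        intro t ht
        simp [Nat.add_sub_cancel_left, Nat.add_comm i t]
      rw [hsplit]
      have htr : ∀ t ∈ range (n - i), (n.choose (i + t) : ℚ) * (((i + t).choose i : ℚ) * ee t)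
          = (n.choose i : ℚ) * ((n - i).choose t : ℚ) * ee t := by
        intro t ht
        have hle : i + t ≤ n := by
          have := mem_range.mp ht; omega
        have := trinom hle
        have : (n.choose (i + t) : ℚ) * ((i + t).choose i : ℚ) = (n.choose i : ℚ) * ((n - i).choose t : ℚ) := by
          exact_mod_cast congrArg (Nat.cast : ℕ → ℚ) this
        rw [← mul_assoc, this]
      rw [Finset.sum_congr rfl htr]
      have : ∑ t ∈ range (n - i), (n.choose i : ℚ) * ((n - i).choose t : ℚ) * ee t
          = (n.choose i : ℚ) * ∑ t ∈ range (n - i), ((n - i).choose t : ℚ) * ee t := by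
        rw [Finset.mul_sum]; apply Finset.sum_congr rfl; intro t _; ring
      rw [this, sum_choose_ee (n - i)]
      have hni : ¬ (n - i = 0) := by omega
      simp only [hni, if_false]
      rw [smul_eq_mul]
      ring

theorem natDegree_euler_le (n : ℕ) : (eulerPoly n).natDegree ≤ n := by
  apply Polynomial.natDegree_le_iff_coeff_eq_zero.mpr
  intro i hi
  rw [coeff_euler n i, Nat.choose_eq_zero_of_lt hi]
  simp

theorem eval_euler (n : ℕ) (y : ℚ) :
    (eulerPoly n).eval y = ∑ i ∈ range (n + 1), (n.choose i : ℚ) * ee (n - i) * y ^ i := by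
  rw [Polynomial.eval_eq_sum_range' (lt_of_le_of_lt (natDegree_euler_le n) (Nat.lt_succ_self n))]
  apply Finset.sum_congr rfl
  intro i _
  rw [coeff_euler n i]

-- key inner sum: ∑_{i ∈ range (n+1)} C(n,i) C(i,j) ee (n-i) = C(n,j) * (2*[j=n] - ee (n-j)) for j ≤ n
theorem euler_inner_sum (n j : ℕ) (hj : j ≤ n) :
    ∑ i ∈ range (n + 1), (n.choose i : ℚ) * ((i.choose j : ℚ) * ee (n - i))
      = (n.choose j : ℚ) * ((if j = n then 2 else 0) - ee (n - j)) := by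
  have hsplit : ∑ i ∈ range (n + 1), (n.choose i : ℚ) * ((i.choose j : ℚ) * ee (n - i))
      = ∑ t ∈ range (n - j + 1), (n.choose (j + t) : ℚ) * (((j + t).choose j : ℚ) * ee (n - (j + t))) := by
    rw [← Finset.sum_range_add_sum_Ico _ (show j ≤ n + 1 by omega)]
    have h1 : ∑ i ∈ Finset.range j, (n.choose i : ℚ) * ((i.choose j : ℚ) * ee (n - i)) = 0 := by
      apply Finset.sum_eq_zero
      intro i hi
      have : i.choose j = 0 := Nat.choose_eq_zero_of_lt (mem_range.mp hi)
      simp [this]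
    rw [h1, zero_add, Finset.sum_Ico_eq_sum_range]
    have : n + 1 - j = n - j + 1 := by omega
    rw [this]
  rw [hsplit]
  have htr : ∀ t ∈ range (n - j + 1), (n.choose (j + t) : ℚ) * (((j + t).choose j : ℚ) * ee (n - (j + t)))
      = (n.choose j : ℚ) * (((n - j).choose t : ℚ) * ee (n - j - t)) := by
    intro t ht
    have hle : j + t ≤ n := by have := mem_range.mp ht; omega
    have h2 : (n.choose (j + t) : ℚ) * ((j + t).choose j : ℚ) = (n.choose j : ℚ) * ((n - j).choose t : ℚ) := by
      exact_mod_cast congrArg (Nat.cast : ℕ → ℚ) (trinom hle)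
    have h3 : n - (j + t) = n - j - t := by omega
    rw [← mul_assoc, h2, h3, mul_assoc]
  rw [Finset.sum_congr rfl htr, ← Finset.mul_sum]
  congr 1
  -- ∑_{t < n-j+1} C(n-j,t) ee (n-j-t) = 2*[j=n] - ee (n-j)
  set s := n - j with hs
  -- reflect the sum
  have hrefl : ∑ t ∈ range (s + 1), ((s.choose t : ℚ)) * ee (s - t)
      = ∑ t ∈ range (s + 1), ((s.choose t : ℚ)) * ee t := by
    rw [← Finset.sum_range_reflect (fun t => ((s.choose t : ℚ)) * ee t) (s + 1)]
    apply Finset.sum_congr rfl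
    intro t ht
    have ht' : t ≤ s := by have := mem_range.mp ht; omega
    have : s + 1 - 1 - t = s - t := by omega
    rw [this, Nat.choose_symm ht']
  rw [hrefl, Finset.sum_range_succ, sum_choose_ee s, Nat.choose_self]
  by_cases h : j = n
  · subst h; simp only [Nat.sub_self, if_pos rfl, hs]
    simp
    ring
  · have h2 : ¬(n - j = 0) := by omega
    simp only [h, h2, hs, if_false]
    push_cast
    ring

theorem euler_pair (n : ℕ) (y : ℚ) :
    (eulerPoly n).eval y + (eulerPoly n).eval (y + 1) = 2 * y ^ n := by
  rw [eval_euler, eval_euler]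
  have hexp : ∀ i ∈ range (n + 1), (n.choose i : ℚ) * ee (n - i) * (y + 1) ^ i
      = ∑ j ∈ range (n + 1), (n.choose i : ℚ) * ee (n - i) * ((i.choose j : ℚ) * y ^ j) := by
    intro i hi
    have hpow : (y + 1) ^ i = ∑ j ∈ range (i + 1), (i.choose j : ℚ) * y ^ j := by
      rw [add_pow]
      apply Finset.sum_congr rfl
      intro j _
      simp [mul_comm, mul_assoc]
    rw [hpow, Finset.mul_sum]
    apply (Finset.sum_subset (by intro x hx; simp at hx ⊢; have := mem_range.mp hi; omega) ?_)
    intro j _ hj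
    simp only [mem_range, not_lt] at hj
    have : i.choose j = 0 := Nat.choose_eq_zero_of_lt (by omega)
    simp [this]
  rw [Finset.sum_congr rfl hexp, Finset.sum_comm]
  rw [← Finset.sum_add_distrib]
  have : ∀ j ∈ range (n + 1),
      ((n.choose j : ℚ) * ee (n - j) * y ^ j + ∑ i ∈ range (n + 1), (n.choose i : ℚ) * ee (n - i) * ((i.choose j : ℚ) * y ^ j))
      = (if j = n then 2 * y ^ n else 0) := by
    intro j hj
    have hj' : j ≤ n := by have := mem_range.mp hj; omega
    have : ∑ i ∈ range (n + 1), (n.choose i : ℚ) * ee (n - i) * ((i.choose j : ℚ) * y ^ j)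
        = (∑ i ∈ range (n + 1), (n.choose i : ℚ) * ((i.choose j : ℚ) * ee (n - i))) * y ^ j := by
      rw [Finset.sum_mul]
      apply Finset.sum_congr rfl
      intro i _
      ring
    rw [this, euler_inner_sum n j hj']
    split
    · rename_i h; subst h; simp [Nat.choose_self]; ring
    · ring
  rw [Finset.sum_congr rfl this, Finset.sum_ite_eq' (range (n+1)) n (fun _ => 2 * y ^ n)]
  simp

-- ### telescope
theorem euler_telescope (n : ℕ) (N : ℕ) :
    2 * ∑ k ∈ range N, (-1:ℚ)^k * (k:ℚ)^n = ee n - (-1)^N * (eulerPoly n).eval ((N:ℚ)) := by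
  induction N with
  | zero => simp [ee]
  | succ N IH =>
    rw [Finset.sum_range_succ, mul_add, IH, pow_succ]
    have hp := euler_pair n (N:ℚ)
    push_cast
    linear_combination (-(-1:ℚ)^N) * hp

def Sz (n r : ℕ) : ℤ := ∑ k ∈ range (2^r), (-1:ℤ)^k * (k:ℤ)^n

-- ### master identity
theorem master (M r : ℕ) (hr : 1 ≤ r) :
    ((M+2 : ℕ):ℚ) * ee (M+1) * 2^r
      = -2 * (Sz (M+2) r : ℚ)
        - ∑ t ∈ range (M+1), (((M+2).choose (t+2) : ℚ)) * ee (M - t) * ((2:ℚ)^r)^(t+2) := by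
  have htel := euler_telescope (M+2) (2^r)
  have heven : (-1:ℚ)^(2^r : ℕ) = 1 := by
    apply Even.neg_one_pow
    exact (Nat.even_pow).mpr ⟨even_iff_two_dvd.mpr ⟨1, rfl⟩, by omega⟩
  rw [heven, one_mul] at htel
  push_cast at htel
  have hcast : 2 * (Sz (M+2) r : ℚ) = ee (M+2) - (eulerPoly (M+2)).eval ((2:ℚ)^r) := by
    rw [← htel]
    unfold Sz
    push_cast
    ring
  have heval := eval_euler (M+2) ((2:ℚ)^r)
  -- peel two terms from the bottom
  rw [Finset.sum_range_succ' _ (M+2), Finset.sum_range_succ' _ (M+1)] at heval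
  simp only [Nat.choose_zero_right, Nat.sub_zero, pow_zero, Nat.cast_one] at heval
  have harg : ∀ t, M + 2 - (t + 1 + 1) = M - t := by intro t; omega
  have hch1 : (M+2).choose 1 = M + 2 := by simp
  have h21 : M + 2 - 1 = M + 1 := by omega
  rw [hch1, h21] at heval
  have : (eulerPoly (M+2)).eval ((2:ℚ)^r)
      = (∑ t ∈ range (M+1), (((M+2).choose (t+2) : ℚ)) * ee (M - t) * ((2:ℚ)^r)^(t+2))
        + ((M+2 : ℕ):ℚ) * ee (M+1) * 2^r + ee (M+2) := by
    rw [heval]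
    have hsum : ∑ k ∈ Finset.range (M + 1),
          ((M + 2).choose (k + 1 + 1) : ℚ) * ee (M + 2 - (k + 1 + 1)) * ((2:ℚ) ^ r) ^ (k + 1 + 1)
        = ∑ t ∈ Finset.range (M + 1), (((M + 2).choose (t + 2) : ℚ)) * ee (M - t) * ((2:ℚ) ^ r) ^ (t + 2) := by
      apply Finset.sum_congr rfl
      intro t _
      rw [harg t]
    rw [hsum]
    push_cast
    ring
  rw [this] at hcast
  linarith [hcast]

-- ### integer congruences
theorem modEq_sum {n : ℤ} {s : Finset ℕ} {f g : ℕ → ℤ}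
    (h : ∀ i ∈ s, f i ≡ g i [ZMOD n]) : (∑ i ∈ s, f i) ≡ (∑ i ∈ s, g i) [ZMOD n] := by
  rw [Int.modEq_iff_dvd, ← Finset.sum_sub_distrib]
  apply Finset.dvd_sum
  intro i hi
  exact (h i hi).dvd

def Vs (n s : ℕ) : ℤ := ∑ i ∈ range (2^s), (2*(i:ℤ)+1)^n

theorem sum_range_double (f : ℕ → ℤ) (N : ℕ) :
    ∑ k ∈ range (2*N), f k = ∑ i ∈ range N, (f (2*i) + f (2*i+1)) := by
  induction N with
  | zero => simp
  | succ N IH =>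
    rw [Finset.sum_range_succ, ← IH, Nat.mul_succ, Finset.sum_range_succ, Finset.sum_range_succ]
    ring_nf

theorem sum_range_add' (f : ℕ → ℤ) (a b : ℕ) :
    ∑ i ∈ range (a+b), f i = ∑ i ∈ range a, f i + ∑ i ∈ range b, f (a + i) := by
  induction b with
  | zero => simp
  | succ b IH => rw [← Nat.add_assoc, Finset.sum_range_succ, IH, Finset.sum_range_succ]; ring

theorem Vs_succ (n s : ℕ) :
    Vs n (s+1) = ∑ i ∈ range (2^s), ((2*(i:ℤ)+1)^n + ((2:ℤ)^(s+2) - (2*(i:ℤ)+1))^n) := by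
  unfold Vs
  rw [Finset.sum_add_distrib]
  have h2 : (2:ℕ)^(s+1) = 2^s + 2^s := by ring
  rw [h2, sum_range_add' (fun i => (2*(i:ℤ)+1)^n) (2^s) (2^s)]
  congr 1
  rw [← Finset.sum_range_reflect (fun i => (2*((2^s + i : ℕ):ℤ)+1)^n) (2^s)]
  apply Finset.sum_congr rfl
  intro i hi
  have hi' : i < 2^s := mem_range.mp hi
  have harg : ((2^s + (2^s - 1 - i) : ℕ):ℤ) = 2*(2:ℤ)^s - 1 - (i:ℤ) := by
    have h1 : (2:ℕ)^s + (2^s - 1 - i) = 2*2^s - (1+i) := by omega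
    rw [h1, Nat.cast_sub (by omega)]
    push_cast
    ring
  rw [harg]
  have : (2:ℤ)^(s+2) = 4 * 2^s := by ring
  rw [this]
  ring_nf

theorem sq_modEq (s : ℕ) (a : ℤ) : ((2:ℤ)^(s+2) - a)^2 ≡ a^2 [ZMOD (2:ℤ)^(s+3)] := by
  rw [Int.modEq_iff_dvd]
  exact ⟨a - 2^(s+1), by ring⟩

theorem pow_modEq_even (s n : ℕ) (hn : Even n) (a : ℤ) :
    ((2:ℤ)^(s+2) - a)^n ≡ a^n [ZMOD (2:ℤ)^(s+3)] := by
  obtain ⟨c, hc⟩ := hn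
  have : n = 2*c := by omega
  subst this
  rw [pow_mul, pow_mul]
  exact (sq_modEq s a).pow c

theorem pow_modEq_odd (s n : ℕ) (hn : Odd n) (a : ℤ) :
    ((2:ℤ)^(s+2) - a)^n ≡ (2:ℤ)^(s+2) * a^(n-1) - a^n [ZMOD (2:ℤ)^(s+3)] := by
  obtain ⟨c, hc⟩ := hn
  subst hc
  have h1 : ((2:ℤ)^(s+2) - a)^(2*c+1) = ((2:ℤ)^(s+2) - a) * (((2:ℤ)^(s+2) - a)^2)^c := by
    rw [← pow_mul]; ring
  rw [h1]
  have h2 : ((2:ℤ)^(s+2) - a) * (((2:ℤ)^(s+2) - a)^2)^c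
      ≡ ((2:ℤ)^(s+2) - a) * (a^2)^c [ZMOD (2:ℤ)^(s+3)] :=
    Int.ModEq.mul_left _ ((sq_modEq s a).pow c)
  apply h2.trans
  have h3 : ((2:ℤ)^(s+2) - a) * (a^2)^c = (2:ℤ)^(s+2) * a^(2*c) - a^(2*c+1) := by
    rw [← pow_mul]; ring
  rw [h3]
  have h4 : 2*c + 1 - 1 = 2*c := by omega
  rw [h4]

theorem Vs_even_mod (n : ℕ) (hn : Even n) : ∀ s : ℕ, Vs n s ≡ 2^s [ZMOD (2:ℤ)^(s+2)] := by
  intro s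
  induction s with
  | zero =>
    unfold Vs
    norm_num
  | succ s IH =>
    rw [Vs_succ]
    have h1 : ∑ i ∈ range (2^s), ((2*(i:ℤ)+1)^n + ((2:ℤ)^(s+2) - (2*(i:ℤ)+1))^n)
        ≡ ∑ i ∈ range (2^s), (2 * (2*(i:ℤ)+1)^n) [ZMOD (2:ℤ)^(s+3)] := by
      apply modEq_sum
      intro i _
      have := pow_modEq_even s n hn (2*(i:ℤ)+1)
      calc (2*(i:ℤ)+1)^n + ((2:ℤ)^(s+2) - (2*(i:ℤ)+1))^n
          ≡ (2*(i:ℤ)+1)^n + (2*(i:ℤ)+1)^n [ZMOD (2:ℤ)^(s+3)] := Int.ModEq.add_left _ this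
        _ = 2 * (2*(i:ℤ)+1)^n := by ring
    have h2 : ∑ i ∈ range (2^s), (2 * (2*(i:ℤ)+1)^n) = 2 * Vs n s := by
      rw [← Finset.mul_sum]; rfl
    have h3 : 2 * Vs n s ≡ 2 * 2^s [ZMOD 2 * (2:ℤ)^(s+2)] := IH.mul_left' (c := 2)
    have h4 : (2:ℤ) * 2^(s+2) = 2^(s+3) := by ring
    have h5 : (2:ℤ) * 2^s = 2^(s+1) := by ring
    rw [h4, h5] at h3
    rw [← Vs_succ]
    calc Vs n (s+1) ≡ 2 * Vs n s [ZMOD (2:ℤ)^(s+3)] := by rw [Vs_succ, ← h2]; exact h1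
      _ ≡ 2^(s+1) [ZMOD (2:ℤ)^(s+3)] := h3

theorem Vs_odd_mod (n : ℕ) (hn : Odd n) (s : ℕ) (hs : 1 ≤ s) :
    Vs n (s+1) ≡ 0 [ZMOD (2:ℤ)^(s+3)] := by
  rw [Vs_succ]
  have h1 : ∑ i ∈ range (2^s), ((2*(i:ℤ)+1)^n + ((2:ℤ)^(s+2) - (2*(i:ℤ)+1))^n)
      ≡ ∑ i ∈ range (2^s), (2:ℤ)^(s+2) [ZMOD (2:ℤ)^(s+3)] := by
    apply modEq_sum
    intro i _
    have hodd := pow_modEq_odd s n hn (2*(i:ℤ)+1)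
    have step1 : (2*(i:ℤ)+1)^n + ((2:ℤ)^(s+2) - (2*(i:ℤ)+1))^n
        ≡ (2*(i:ℤ)+1)^n + ((2:ℤ)^(s+2) * (2*(i:ℤ)+1)^(n-1) - (2*(i:ℤ)+1)^n) [ZMOD (2:ℤ)^(s+3)] :=
      Int.ModEq.add_left _ hodd
    have step2 : (2*(i:ℤ)+1)^n + ((2:ℤ)^(s+2) * (2*(i:ℤ)+1)^(n-1) - (2*(i:ℤ)+1)^n)
        = (2:ℤ)^(s+2) * (2*(i:ℤ)+1)^(n-1) := by ring
    rw [step2] at step1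
    apply step1.trans
    -- 2^{s+2} * odd ≡ 2^{s+2} mod 2^{s+3}
    have hoddpow : (2*(i:ℤ)+1)^(n-1) ≡ 1 [ZMOD 2] := by
      have : (2*(i:ℤ)+1) ≡ 1 [ZMOD 2] := by
        rw [Int.modEq_iff_dvd]; exact ⟨-i, by ring⟩
      simpa using this.pow (n-1)
    have := hoddpow.mul_left' (c := (2:ℤ)^(s+2))
    have he : (2:ℤ)^(s+2) * 2 = 2^(s+3) := by ring
    rw [he, mul_one] at this
    exact this
  rw [Finset.sum_const, Finset.card_range, nsmul_eq_mul] at h1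
  apply h1.trans
  rw [Int.modEq_zero_iff_dvd]
  push_cast
  rw [← pow_add]
  apply pow_dvd_pow
  omega

theorem Sz_split (n r : ℕ) (hr : 1 ≤ r) :
    Sz n r = 2^n * (∑ i ∈ range (2^(r-1)), (i:ℤ)^n) - Vs n (r-1) := by
  unfold Sz Vs
  have h2 : (2:ℕ)^r = 2 * 2^(r-1) := by
    rw [← pow_succ']
    congr 1
    omega
  rw [h2, sum_range_double (fun k => (-1:ℤ)^k * (k:ℤ)^n) (2^(r-1))]
  rw [Finset.mul_sum, ← Finset.sum_sub_distrib]
  apply Finset.sum_congr rfl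
  intro i _
  have hm1 : (-1:ℤ)^(2*i) = 1 := by
    rw [pow_mul]; norm_num
  have hm2 : (-1:ℤ)^(2*i+1) = -1 := by
    rw [pow_succ, hm1]; norm_num
  rw [hm1, hm2]
  push_cast
  ring

theorem Sz_even_mod (n r : ℕ) (hn : Even n) (hr : 3 ≤ r) (hnr : r + 1 ≤ n) :
    Sz n r ≡ -2^(r-1) [ZMOD (2:ℤ)^(r+1)] := by
  rw [Sz_split n r (by omega)]
  have h1 : (2:ℤ)^n * (∑ i ∈ range (2^(r-1)), (i:ℤ)^n) ≡ 0 [ZMOD (2:ℤ)^(r+1)] := by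
    rw [Int.modEq_zero_iff_dvd]
    exact Dvd.dvd.mul_right (pow_dvd_pow 2 hnr) _
  have h2 : Vs n (r-1) ≡ 2^(r-1) [ZMOD (2:ℤ)^(r+1)] := by
    have := Vs_even_mod n hn (r-1)
    have he : r - 1 + 2 = r + 1 := by omega
    rwa [he] at this
  calc 2^n * (∑ i ∈ range (2^(r-1)), (i:ℤ)^n) - Vs n (r-1)
      ≡ 0 - 2^(r-1) [ZMOD (2:ℤ)^(r+1)] := h1.sub h2
    _ = -2^(r-1) := by ring

theorem Sz_odd_mod (n r : ℕ) (hn : Odd n) (hr : 3 ≤ r) (hnr : r + 1 ≤ n) :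
    Sz n r ≡ 0 [ZMOD (2:ℤ)^(r+1)] := by
  have h1 : (2:ℤ)^n * (∑ i ∈ range (2^(r-1)), (i:ℤ)^n) ≡ 0 [ZMOD (2:ℤ)^(r+1)] := by
    rw [Int.modEq_zero_iff_dvd]
    exact Dvd.dvd.mul_right (pow_dvd_pow 2 hnr) _
  have h2 : Vs n (r-1) ≡ 0 [ZMOD (2:ℤ)^(r+1)] := by
    have hs : r - 1 = (r - 2) + 1 := by omega
    have := Vs_odd_mod n hn (r-2) (by omega)
    have he : r - 2 + 1 = r - 1 := by omega
    have he2 : r - 2 + 3 = r + 1 := by omega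
    rw [he, he2] at this
    exact this
  rw [Sz_split n r (by omega)]
  calc 2^n * (∑ i ∈ range (2^(r-1)), (i:ℤ)^n) - Vs n (r-1)
      ≡ 0 - 0 [ZMOD (2:ℤ)^(r+1)] := h1.sub h2
    _ = 0 := by ring

-- ### padicNorm helpers
theorem padicNorm_two_pow (k : ℕ) : padicNorm 2 ((2:ℚ)^k) = ((2:ℚ)^k)⁻¹ := by
  induction k with
  | zero => simp
  | succ k IH =>
    have h2 : padicNorm 2 (2:ℚ) = (2:ℚ)⁻¹ := by
      have := padicNorm.padicNorm_p (p := 2) (by norm_num)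
      simpa using this
    rw [pow_succ, padicNorm.mul, IH, h2, mul_inv]

theorem padicNorm_natCast_le_one (a : ℕ) : padicNorm 2 ((a:ℚ)) ≤ 1 := by
  have := padicNorm.of_int (p := 2) (a : ℤ)
  simpa using this

theorem padicNorm_intCast_le_one (a : ℤ) : padicNorm 2 ((a:ℚ)) ≤ 1 :=
  padicNorm.of_int a

theorem padicNorm_nat_inv_le (a : ℕ) (ha : 0 < a) : padicNorm 2 (((a:ℚ))⁻¹) ≤ (a:ℚ) := by
  have hnz : ((a:ℚ)) ≠ 0 := Nat.cast_ne_zero.mpr (by omega)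
  rw [← one_div, padicNorm.div, padicNorm.one]
  have hval : padicValRat 2 (a:ℚ) = padicValNat 2 a := padicValRat.of_nat
  have hnorm : padicNorm 2 (a:ℚ) = (2:ℚ) ^ (-(padicValNat 2 a : ℤ)) := by
    rw [padicNorm.eq_zpow_of_nonzero hnz, hval]
    norm_num
  rw [hnorm, zpow_neg, one_div, inv_inv]
  have h2 : (2:ℕ)^(padicValNat 2 a) ≤ a := Nat.le_of_dvd ha pow_padicValNat_dvd
  have hzc : ((2:ℚ))^((padicValNat 2 a : ℤ)) = ((2^(padicValNat 2 a) : ℕ) : ℚ) := by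
    rw [zpow_natCast]
    push_cast
    ring
  rw [hzc]
  exact_mod_cast h2

theorem dyadic_int {q : ℚ} {c : ℕ} (hd : ∃ z : ℤ, (2^c : ℚ) * q = z)
    (hn : padicNorm 2 q ≤ 1) : ∃ g : ℤ, q = (g:ℚ) := by
  by_cases hq : q = 0
  · exact ⟨0, by simp [hq]⟩
  obtain ⟨z, hz⟩ := hd
  have h2c : ((2^c : ℚ)) ≠ 0 := by positivity
  have hqz : q = (z:ℚ) / ((2^c : ℤ) : ℚ) := by
    push_cast
    field_simp
    linarith [hz]
  have hden2 : q.den ∣ 2^c := by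
    have h := Rat.den_dvd z (2^c)
    rw [Rat.divInt_eq_div] at h
    rw [← hqz] at h
    exact_mod_cast h
  obtain ⟨j, hj, hjden⟩ := (Nat.dvd_prime_pow Nat.prime_two).mp hden2
  rcases Nat.eq_zero_or_pos j with hj0 | hjpos
  · subst hj0
    simp only [pow_zero] at hjden
    refine ⟨q.num, ?_⟩
    rw [← Rat.num_div_den q, hjden]
    simp
  · exfalso
    -- numerator is odd, denominator even: norm > 1
    have hnumodd : ¬ (2:ℤ) ∣ q.num := by
      intro hdvd
      have hco := q.reduced
      have h2den : 2 ∣ q.den := by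
        rw [hjden]
        exact dvd_pow_self 2 (by omega)
      have : (2:ℕ) ∣ Nat.gcd q.num.natAbs q.den := Nat.dvd_gcd (by
        have := Int.natAbs_dvd_natAbs.mpr hdvd
        simpa using this) h2den
      rw [hco] at this
      omega
    have hnormnum : padicNorm 2 ((q.num : ℚ)) = 1 := by
      rw [padicNorm.int_eq_one_iff]
      exact_mod_cast hnumodd
    have : padicNorm 2 q = 1 / padicNorm 2 ((q.den : ℚ)) := by
      calc padicNorm 2 q = padicNorm 2 ((q.num : ℚ) / (q.den : ℚ)) :=
            congrArg (padicNorm 2) (Rat.num_div_den q).symm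
        _ = 1 / padicNorm 2 ((q.den : ℚ)) := by rw [padicNorm.div, hnormnum]
    have hdenq : padicNorm 2 ((q.den : ℚ)) = ((2:ℚ)^j)⁻¹ := by
      rw [hjden]
      push_cast
      exact padicNorm_two_pow j
    rw [hdenq] at this
    rw [this] at hn
    have h2j : (1:ℚ) < 2^j := by
      have : (2:ℚ)^0 < 2^j := by
        apply pow_lt_pow_right₀ (by norm_num) (by omega)
      simpa using this
    rw [one_div, inv_inv] at hn
    linarith

theorem four_mul_le_two_pow : ∀ t : ℕ, 4 ≤ t → 4 * t ≤ 2^t := by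
  intro t
  induction t with
  | zero => omega
  | succ t IH =>
    intro h
    rcases Nat.lt_or_ge t 4 with h4 | h4
    · interval_cases t <;> revert h <;> decide
    · have h1 := IH h4
      have h2 : (16:ℕ) ≤ 2^t := by
        calc (16:ℕ) = 4 * 4 := by norm_num
          _ ≤ 4 * t := by omega
          _ ≤ 2^t := h1
      rw [pow_succ]
      omega

theorem euler_dyadic : ∀ n : ℕ, ∃ z : ℤ, (2^n : ℚ) * ee n = z := by
  intro n
  induction n using Nat.strong_induction_on with
  | _ n IH =>
    choose f hf using IH
    refine ⟨(if n = 0 then 2^n else 0)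
      - ∑ k ∈ (range n).attach, (n.choose (k:ℕ) : ℤ) * 2^(n-1-(k:ℕ)) * f k (mem_range.mp k.2), ?_⟩
    rw [ee_rec n]
    have hA : (2:ℚ)^n * (if n = 0 then (1:ℚ) else 0) = ((if n = 0 then 2^n else 0 : ℤ) : ℚ) := by
      split <;> simp
    have hB : (2:ℚ)^n * (2⁻¹ * ∑ k ∈ range n, (n.choose k : ℚ) * ee k)
        = ((∑ k ∈ (range n).attach, (n.choose (k:ℕ) : ℤ) * 2^(n-1-(k:ℕ)) * f k (mem_range.mp k.2) : ℤ) : ℚ) := by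
      rw [← Finset.sum_attach (range n) (fun k => (n.choose k : ℚ) * ee k), Finset.mul_sum,
        Finset.mul_sum]
      push_cast
      apply Finset.sum_congr rfl
      intro k _
      have hk : (k:ℕ) < n := mem_range.mp k.2
      have hfk := hf k (mem_range.mp k.2)
      have hexp : (2:ℚ)^n = 2 * (2^(n-1-(k:ℕ)) * 2^(k:ℕ)) := by
        rw [← pow_add, ← pow_succ']
        congr 1
        omega
      calc (2:ℚ)^n * (2⁻¹ * ((n.choose (k:ℕ) : ℚ) * ee (k:ℕ)))
          = (n.choose (k:ℕ) : ℚ) * 2^(n-1-(k:ℕ)) * ((2:ℚ)^(k:ℕ) * ee (k:ℕ)) := by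
            rw [hexp]; ring
        _ = (n.choose (k:ℕ) : ℚ) * 2^(n-1-(k:ℕ)) * ((f k (mem_range.mp k.2) : ℤ) : ℚ) := by rw [hfk]
    push_cast
    push_cast at hA hB
    rw [mul_sub, hA, hB]

theorem ee_one : ee 1 = -(1/2 : ℚ) := by
  rw [ee_rec]
  norm_num [Finset.sum_range_one, ee_zero]

theorem ee_two : ee 2 = 0 := by
  rw [ee_rec]
  rw [Finset.sum_range_succ, Finset.sum_range_one, ee_zero, ee_one]
  norm_num

theorem ee_three : ee 3 = (1/4 : ℚ) := by
  rw [ee_rec]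
  rw [Finset.sum_range_succ, Finset.sum_range_succ, Finset.sum_range_one, ee_zero, ee_one, ee_two]
  norm_num

theorem ee_int : ∀ t : ℕ, ∃ g : ℤ, ((t:ℚ)+1) * ee t = g ∧ (Odd t → Odd g) := by
  intro t
  induction t using Nat.strong_induction_on with
  | _ t IH =>
    rcases Nat.lt_or_ge t 4 with ht4 | ht4
    · interval_cases t
      · exact ⟨1, by simp [ee_zero], fun h => absurd h (by decide)⟩
      · exact ⟨-1, by rw [ee_one]; norm_num, fun _ => ⟨-1, by ring⟩⟩
      · exact ⟨0, by rw [ee_two]; norm_num, fun h => absurd h (by decide)⟩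
      · exact ⟨1, by rw [ee_three]; norm_num, fun _ => ⟨0, by ring⟩⟩
    -- main case t ≥ 4
    have hIHnorm : ∀ s, s < t → padicNorm 2 (ee s) ≤ (s:ℚ)+1 := by
      intro s hs
      obtain ⟨g, hg, -⟩ := IH s hs
      have hs1 : ((s:ℚ)+1) ≠ 0 := by positivity
      have : ee s = (g:ℚ) * (((s:ℚ)+1))⁻¹ := by
        field_simp
        linarith [hg]
      rw [this, padicNorm.mul]
      have h1 : padicNorm 2 ((g:ℚ)) ≤ 1 := padicNorm_intCast_le_one g
      have h2 : padicNorm 2 ((((s:ℚ)+1))⁻¹) ≤ (s:ℚ)+1 := by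
        have := padicNorm_nat_inv_le (s+1) (by omega)
        push_cast at this
        exact this
      calc padicNorm 2 ((g:ℚ)) * padicNorm 2 ((((s:ℚ)+1))⁻¹)
          ≤ 1 * ((s:ℚ)+1) := by
            apply mul_le_mul h1 h2 (padicNorm.nonneg _) (by norm_num)
        _ = (s:ℚ)+1 := by ring
    -- master identity with M = t-1, r = t
    have hM := master (t-1) t (by omega)
    have hM2 : t - 1 + 2 = t + 1 := by omega
    have hM1 : t - 1 + 1 = t := by omega
    rw [hM2, hM1] at hM
    -- hM : ((t+1 : ℕ):ℚ) * ee t * 2^t = -2 * Sz (t+1) t - ∑ j ∈ range t, C(t+1, j+2) * ee (t-1-j) * (2^t)^(j+2)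
    set q : ℚ := ((t:ℚ)+1) * ee t with hqdef
    have h2t : ((2:ℚ)^t) ≠ 0 := by positivity
    set S : ℚ := ∑ j ∈ range t, (((t+1).choose (j+2) : ℚ)) * ee (t-1-j) * ((2:ℚ)^t)^(j+2) with hSdef
    have hq : q = -2 * (Sz (t+1) t : ℚ) / 2^t - S / 2^t := by
      rw [← sub_div, eq_div_iff h2t]
      calc q * 2^t = ((t+1:ℕ):ℚ) * ee t * 2^t := by push_cast; ring
        _ = _ := hM
    -- bound on the tail sum
    have hSbound : padicNorm 2 (S / 2^t) ≤ 1/4 := by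
      have hrw : S / 2^t = ∑ j ∈ range t,
          ((((t+1).choose (j+2) : ℚ)) * ee (t-1-j) * ((2:ℚ)^t)^(j+2)) / 2^t := by
        rw [hSdef, Finset.sum_div]
      rw [hrw]
      apply padicNorm.sum_le' ?_ (by norm_num)
      intro j hj
      have hjt : j < t := mem_range.mp hj
      have hterm : (((t+1).choose (j+2) : ℚ)) * ee (t-1-j) * ((2:ℚ)^t)^(j+2) / 2^t
          = (((t+1).choose (j+2) : ℚ)) * ee (t-1-j) * (2:ℚ)^(t*(j+2) - t) := by
        rw [← pow_mul, mul_div_assoc, pow_sub₀ (2:ℚ) (by norm_num) (by nlinarith), div_eq_mul_inv]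
      rw [hterm, padicNorm.mul, padicNorm.mul]
      have hnC : padicNorm 2 (((t+1).choose (j+2) : ℚ)) ≤ 1 := padicNorm_natCast_le_one _
      have hnE : padicNorm 2 (ee (t-1-j)) ≤ (t:ℚ) := by
        have h1 := hIHnorm (t-1-j) (by omega)
        apply h1.trans
        have : t - 1 - j + 1 ≤ t := by omega
        exact_mod_cast (by exact_mod_cast this : ((t-1-j+1 : ℕ):ℚ) ≤ (t:ℚ))
      have hnP : padicNorm 2 ((2:ℚ)^(t*(j+2) - t)) ≤ ((2:ℚ)^t)⁻¹ := by
        rw [padicNorm_two_pow]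
        apply inv_anti₀ (by positivity)
        apply pow_le_pow_right₀ (by norm_num)
        have h0 : t*(j+2) = t*(j+1) + t := by ring
        have h1 : t*(j+2) - t = t*(j+1) := by omega
        rw [h1]
        exact Nat.le_mul_of_pos_right t (by omega)
      have hmul1 : padicNorm 2 (((t+1).choose (j+2) : ℚ)) * padicNorm 2 (ee (t-1-j))
          ≤ 1 * (t:ℚ) := mul_le_mul hnC hnE (padicNorm.nonneg _) (by norm_num)
      have hmul2 : padicNorm 2 (((t+1).choose (j+2) : ℚ)) * padicNorm 2 (ee (t-1-j))
            * padicNorm 2 ((2:ℚ)^(t*(j+2) - t))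
          ≤ (1 * (t:ℚ)) * ((2:ℚ)^t)⁻¹ :=
        mul_le_mul hmul1 hnP (padicNorm.nonneg _) (by positivity)
      apply hmul2.trans
      rw [one_mul]
      have hfour : ((4*t : ℕ):ℚ) ≤ ((2^t : ℕ):ℚ) := by
        exact_mod_cast four_mul_le_two_pow t ht4
      push_cast at hfour
      rw [mul_inv_le_iff₀ (by positivity)]
      linarith
    obtain ⟨z0, hz0⟩ := euler_dyadic t
    have hdy : ∃ z : ℤ, (2^t:ℚ) * q = z := by
      refine ⟨((t:ℤ)+1) * z0, ?_⟩
      rw [hqdef]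
      push_cast
      linear_combination ((t:ℚ)+1) * hz0
    have h4norm : padicNorm 2 (4:ℚ) = 1/4 := by
      have h := padicNorm_two_pow 2
      have e : ((2:ℚ)^2) = 4 := by norm_num
      rw [e] at h
      rw [h]
      norm_num
    rcases Nat.even_or_odd t with hev | hod
    · -- t even
      have hodd : Odd (t+1) := Even.add_one hev
      have hSz := Sz_odd_mod (t+1) t hodd (by omega) (by omega)
      obtain ⟨w, hw⟩ := Int.modEq_iff_dvd.mp hSz
      -- hw : 0 - Sz (t+1) t = 2^(t+1) * w
      have hA : -2 * (Sz (t+1) t : ℚ) / 2^t = 4 * (w:ℚ) := by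
        have hint : Sz (t+1) t = -(2^(t+1) * w) := by linarith [hw]
        have hcast : (Sz (t+1) t : ℚ) = -((2:ℚ)^(t+1) * w) := by exact_mod_cast hint
        rw [hcast]
        field_simp
        ring
      have hnormA : padicNorm 2 (-2 * (Sz (t+1) t : ℚ) / 2^t) ≤ 1/4 := by
        rw [hA, padicNorm.mul, h4norm]
        calc (1/4 : ℚ) * padicNorm 2 ((w:ℚ)) ≤ (1/4) * 1 := by
              apply mul_le_mul_of_nonneg_left (padicNorm_intCast_le_one w) (by norm_num)
          _ ≤ 1/4 := by norm_num
      have hnormq : padicNorm 2 q ≤ 1 := by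
        rw [hq]
        apply padicNorm.sub.trans
        apply max_le (hnormA.trans (by norm_num)) (hSbound.trans (by norm_num))
      obtain ⟨g, hg⟩ := dyadic_int hdy hnormq
      exact ⟨g, by rw [← hg], fun hoddt => absurd hoddt (Nat.not_odd_iff_even.mpr hev)⟩
    · -- t odd
      have heven : Even (t+1) := Odd.add_one hod
      have hSz := Sz_even_mod (t+1) t heven (by omega) (by omega)
      obtain ⟨w, hw⟩ := Int.modEq_iff_dvd.mp hSz
      -- hw : -2^(t) ... : -2^(t+1-1) - Sz = 2^(t+2) * w  (r = t: -2^(t-1))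
      have hz2 : (2:ℤ) * Sz (t+1) t = -2^t - 2^(t+2) * w := by
        have h2t' : (2:ℤ)^t = 2 * 2^(t-1) := by
          rw [← pow_succ']
          congr 1
          omega
        have h2t2 : (2:ℤ)^(t+2) = 2 * 2^(t+1) := by ring
        rw [h2t', h2t2]
        linarith [hw]
      have hA : -2 * (Sz (t+1) t : ℚ) / 2^t - 1 = 4 * (w:ℚ) := by
        have hcast : (2:ℚ) * (Sz (t+1) t : ℚ) = -(2:ℚ)^t - 2^(t+2) * w := by exact_mod_cast hz2
        rw [div_sub_one h2t, div_eq_iff h2t]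
        have h22 : (2:ℚ)^(t+2) = 4 * 2^t := by ring
        linear_combination (-1:ℚ) * hcast + (w:ℚ) * h22
      have hA' : -2 * (Sz (t+1) t : ℚ) / 2^t = 1 + 4 * (w:ℚ) := by linarith [hA]
      have hnorm4w : padicNorm 2 (4 * (w:ℚ)) ≤ 1/4 := by
        rw [padicNorm.mul, h4norm]
        calc (1/4 : ℚ) * padicNorm 2 ((w:ℚ)) ≤ (1/4) * 1 := by
              apply mul_le_mul_of_nonneg_left (padicNorm_intCast_le_one w) (by norm_num)
          _ ≤ 1/4 := by norm_num
      have hnormA : padicNorm 2 (-2 * (Sz (t+1) t : ℚ) / 2^t) ≤ 1 := by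
        rw [hA']
        apply padicNorm.nonarchimedean.trans
        apply max_le (by rw [padicNorm.one]) (hnorm4w.trans (by norm_num))
      have hnormq : padicNorm 2 q ≤ 1 := by
        rw [hq]
        apply padicNorm.sub.trans
        apply max_le hnormA (hSbound.trans (by norm_num))
      obtain ⟨g, hg⟩ := dyadic_int hdy hnormq
      refine ⟨g, by rw [← hg], fun _ => ?_⟩
      -- parity
      have hq1 : q - 1 = (-2 * (Sz (t+1) t : ℚ) / 2^t - 1) - S/2^t := by
        rw [hq]; ring
      have hnormq1 : padicNorm 2 (q - 1) ≤ 1/4 := by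
        rw [hq1]
        apply padicNorm.sub.trans
        apply max_le (by rw [hA]; exact hnorm4w) hSbound
      have hgq : ((g - 1 : ℤ) : ℚ) = q - 1 := by
        push_cast
        rw [← hg]
      have : padicNorm 2 ((g - 1 : ℤ) : ℚ) < 1 := by
        rw [hgq]
        exact lt_of_le_of_lt hnormq1 (by norm_num)
      have hdvd : (2:ℤ) ∣ (g - 1) := (padicNorm.int_lt_one_iff (p := 2) (g-1)).mp this
      obtain ⟨k, hk⟩ := hdvd
      exact ⟨k, by omega⟩

theorem padicNorm_nat_inv_eq (a : ℕ) (ha : 0 < a) :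
    padicNorm 2 (((a:ℚ))⁻¹) = (2:ℚ)^(padicValNat 2 a) := by
  have hnz : ((a:ℚ)) ≠ 0 := Nat.cast_ne_zero.mpr (by omega)
  rw [← one_div, padicNorm.div, padicNorm.one]
  have hval : padicValRat 2 (a:ℚ) = padicValNat 2 a := padicValRat.of_nat
  have hnorm : padicNorm 2 (a:ℚ) = (2:ℚ) ^ (-(padicValNat 2 a : ℤ)) := by
    rw [padicNorm.eq_zpow_of_nonzero hnz, hval]
    norm_num
  rw [hnorm, zpow_neg, one_div, inv_inv, zpow_natCast]

theorem padicNorm_nat_inv_le_pow (a m : ℕ) (ha : 0 < a) (hm : 1 ≤ m) (h : a < 2^m) :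
    padicNorm 2 (((a:ℚ))⁻¹) ≤ (2:ℚ)^(m-1) := by
  rw [padicNorm_nat_inv_eq a ha]
  apply pow_le_pow_right₀ (by norm_num)
  have hdvd : 2^(padicValNat 2 a) ∣ a := pow_padicValNat_dvd
  have hle : 2^(padicValNat 2 a) ≤ a := Nat.le_of_dvd ha hdvd
  by_contra hc
  push_neg at hc
  have : m ≤ padicValNat 2 a := by omega
  have : (2:ℕ)^m ≤ 2^(padicValNat 2 a) := Nat.pow_le_pow_right (by norm_num) this
  omega

theorem stmt_18 (m n : ℕ) (hm : 1 ≤ m) (hn : n = 2 ^ m - 1) :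
    IsLeast {D : ℕ | 0 < D ∧ ∀ i : ℕ,
        ((D : ℚ) * (eulerPoly n - Polynomial.C ((eulerPoly n).eval 1)).coeff i).den = 1}
      (2 ^ (m - 1)) := by
  have h2m : 2 ≤ 2^m := by
    calc 2 = 2^1 := by norm_num
      _ ≤ 2^m := Nat.pow_le_pow_right (by norm_num) hm
  have hn1 : 1 ≤ n := by omega
  have hnsucc : n + 1 = 2^m := by omega
  have hoddn : Odd n := by
    have h1 : 1 ≤ 2^(m-1) := Nat.one_le_two_pow
    have h2 : 2^m = 2 * 2^(m-1) := by
      rw [← pow_succ']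
      congr 1
      omega
    exact ⟨2^(m-1) - 1, by omega⟩
  obtain ⟨g, hg, hgodd'⟩ := ee_int n
  have hgodd : Odd g := hgodd' hoddn
  have hcastn : ((n:ℚ)+1) = ((2^m : ℕ) : ℚ) := by
    rw [← hnsucc]
    push_cast
    ring
  have heval1 : (eulerPoly n).eval 1 = - ee n := by
    have hp := euler_pair n 0
    have h0n : (0:ℚ)^n = 0 := by
      apply zero_pow
      omega
    rw [h0n] at hp
    have : (eulerPoly n).eval 0 + (eulerPoly n).eval 1 = 0 := by
      simpa using hp
    have hee0 : (eulerPoly n).eval 0 = ee n := rfl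
    linarith [this, hee0.symm.le]
  set P : Polynomial ℚ := eulerPoly n - Polynomial.C ((eulerPoly n).eval 1) with hP
  have hcoeff0 : P.coeff 0 = 2 * ee n := by
    rw [hP, Polynomial.coeff_sub, Polynomial.coeff_C_zero, heval1, coeff_euler n 0]
    simp [ee]
    ring
  have hcoeffi : ∀ i, 1 ≤ i → P.coeff i = (n.choose i : ℚ) * ee (n - i) := by
    intro i hi
    rw [hP, Polynomial.coeff_sub, Polynomial.coeff_C, if_neg (by omega), coeff_euler n i]
    ring
  have heen : ee n = (g:ℚ) / 2^m := by
    rw [eq_div_iff (by positivity)]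
    have h2mq : ((2:ℚ)^m) = ((n:ℚ)+1) := by
      rw [hcastn]
      push_cast
      ring
    rw [h2mq]
    linarith [hg]
  constructor
  · -- membership
    refine ⟨by positivity, ?_⟩
    intro i
    rcases Nat.eq_zero_or_pos i with hi0 | hipos
    · subst hi0
      have : ((2^(m-1) : ℕ) : ℚ) * P.coeff 0 = (g:ℚ) := by
        rw [hcoeff0, heen]
        have hsplit : (2:ℚ)^m = 2^(m-1) * 2 := by
          rw [← pow_succ]
          congr 1
          omega
        rw [hsplit]
        push_cast
        field_simp
      rw [this]
      exact Rat.den_intCast g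
    · rw [hcoeffi i hipos]
      by_cases hin : i ≤ n
      · -- nonzero possible: bound norm
        set s := n - i with hs
        have hslt : s < n := by omega
        obtain ⟨zs, hzs⟩ := euler_dyadic s
        set q : ℚ := ((2^(m-1) : ℕ) : ℚ) * ((n.choose i : ℚ) * ee s) with hqdef
        have hdy : ∃ z : ℤ, (2^s : ℚ) * q = z := by
          refine ⟨(2^(m-1) : ℤ) * (n.choose i : ℤ) * zs, ?_⟩
          rw [hqdef]
          push_cast
          linear_combination ((2:ℚ)^(m-1) * (n.choose i : ℚ)) * hzs
        have hnormq : padicNorm 2 q ≤ 1 := by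
          obtain ⟨gs, hgs, -⟩ := ee_int s
          have hsnz : ((s:ℚ)+1) ≠ 0 := by positivity
          have hees : ee s = (gs:ℚ) * (((s+1 : ℕ):ℚ))⁻¹ := by
            push_cast
            field_simp
            linarith [hgs]
          rw [hqdef, hees, padicNorm.mul, padicNorm.mul, padicNorm.mul]
          have hb1 : padicNorm 2 (((2^(m-1) : ℕ):ℚ)) = ((2:ℚ)^(m-1))⁻¹ := by
            push_cast
            exact padicNorm_two_pow (m-1)
          have hb2 : padicNorm 2 ((n.choose i : ℚ)) ≤ 1 := padicNorm_natCast_le_one _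
          have hb3 : padicNorm 2 ((gs:ℚ)) ≤ 1 := padicNorm_intCast_le_one _
          have hb4 : padicNorm 2 ((((s+1 : ℕ):ℚ))⁻¹) ≤ (2:ℚ)^(m-1) := by
            apply padicNorm_nat_inv_le_pow (s+1) m (by omega) hm
            omega
          rw [hb1]
          have hstep : padicNorm 2 ((gs:ℚ)) * padicNorm 2 ((((s+1 : ℕ):ℚ))⁻¹)
              ≤ 1 * (2:ℚ)^(m-1) :=
            mul_le_mul hb3 hb4 (padicNorm.nonneg _) (by norm_num)
          have hstep2 : padicNorm 2 ((n.choose i : ℚ)) *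
                (padicNorm 2 ((gs:ℚ)) * padicNorm 2 ((((s+1 : ℕ):ℚ))⁻¹))
              ≤ 1 * (1 * (2:ℚ)^(m-1)) :=
            mul_le_mul hb2 hstep (mul_nonneg (padicNorm.nonneg _) (padicNorm.nonneg _)) (by norm_num)
          calc ((2:ℚ)^(m-1))⁻¹ * (padicNorm 2 ((n.choose i : ℚ)) *
                (padicNorm 2 ((gs:ℚ)) * padicNorm 2 ((((s+1 : ℕ):ℚ))⁻¹)))
              ≤ ((2:ℚ)^(m-1))⁻¹ * (1 * (1 * (2:ℚ)^(m-1))) := by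
                apply mul_le_mul_of_nonneg_left hstep2 (by positivity)
            _ = 1 := by field_simp
        obtain ⟨z, hz⟩ := dyadic_int hdy hnormq
        rw [hz]
        exact Rat.den_intCast z
      · have : n.choose i = 0 := Nat.choose_eq_zero_of_lt (by omega)
        rw [this]
        norm_num
  · -- lower bound
    intro D hD
    obtain ⟨hDpos, hDden⟩ := hD
    have h0 := hDden 0
    rw [hcoeff0, heen] at h0
    set q : ℚ := (D:ℚ) * (2 * ((g:ℚ) / 2^m)) with hqdef
    have hq : (q.num : ℚ) = q := by
      conv_rhs => rw [← Rat.num_div_den q]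
      rw [h0]
      simp
    set z : ℤ := q.num with hz
    have heq : (D:ℚ) * 2 * (g:ℚ) = (z:ℚ) * 2^m := by
      have h2m0 : ((2:ℚ)^m) ≠ 0 := by positivity
      have : q * 2^m = (D:ℚ) * 2 * (g:ℚ) := by
        rw [hqdef]
        field_simp
      rw [← this, hq]
    have heqz : (D:ℤ) * 2 * g = z * 2^m := by exact_mod_cast heq
    have hdvd : (2:ℤ)^(m-1) ∣ (D:ℤ) * g := by
      have hsplit : (2:ℤ)^m = 2^(m-1) * 2 := by
        rw [← pow_succ]
        congr 1
        omega
      rw [hsplit] at heqz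
      have hcancel : (D:ℤ) * g = z * 2^(m-1) := by
        have h2 : ((D:ℤ) * g) * 2 = (z * 2^(m-1)) * 2 := by linarith [heqz]
        exact mul_right_cancel₀ (by norm_num) h2
      exact ⟨z, by linarith [hcancel]⟩
    have hcop : IsCoprime ((2:ℤ)^(m-1)) g := by
      apply IsCoprime.pow_left
      rw [Int.isCoprime_iff_gcd_eq_one]
      have hodd : Odd g.natAbs := Int.natAbs_odd.mpr hgodd
      have : Nat.Coprime 2 g.natAbs := Nat.coprime_two_left.mpr hodd
      simpa [Int.gcd] using this
    have hdvdD : (2:ℤ)^(m-1) ∣ (D:ℤ) := hcop.dvd_of_dvd_mul_right hdvd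
    have hdvdDnat : (2:ℕ)^(m-1) ∣ D := by
      have := Int.natCast_dvd_natCast.mp (by exact_mod_cast hdvdD)
      exact this
    exact Nat.le_of_dvd hDpos hdvdDnat
end
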